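/- Let X be a real n×k matrix partitioned by rows of its transpose into blocks X₀ᵀ, X₁ᵀ, …, X_pᵀ. Suppose each stage of the TSQR recursion produces QR factorizations with Q-factors having orthonormal columns. Then the final factor R obtained by sequentially QR-factoring the vertically stacked matrices satisfies RᵀR = XXᵀ, i.e., the resulting factorization is a valid QR decomposition of Xᵀ. -/

import Mathlib

open Matrix BigOperators


theorem aux12 {n c p : ℕ}
    (B : Fin (p + 1) → Matrix (Fin c) (Fin n) ℝ)
    (R : Fin (p + 1) → Matrix (Fin n) (Fin n) ℝ)
    (Xt : Matrix (Fin (p + 1) × Fin c) (Fin n) ℝ)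
    (hXt : ∀ (i : Fin (p + 1)) (a : Fin c) (j : Fin n), Xt (i, a) j = B i a j)
    (h0 : ∃ Q0 : Matrix (Fin c) (Fin n) ℝ, Q0ᵀ * Q0 = 1 ∧ B 0 = Q0 * R 0)
    (hstep : ∀ i : Fin p,
      ∃ Qi : Matrix (Fin n ⊕ Fin c) (Fin n) ℝ, Qiᵀ * Qi = 1 ∧
        Matrix.fromRows (R i.castSucc) (B i.succ) = Qi * R i.succ) :
    ∀ m (hm : m < p + 1), ∃ Q : Matrix (Fin (p + 1) × Fin c) (Fin n) ℝ,
      Qᵀ * Q = 1 ∧ (∀ (j : Fin (p + 1)) (a : Fin c) (k : Fin n), m < (j : ℕ) → Q (j, a) k = 0) ∧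
      (∀ (j : Fin (p + 1)) (a : Fin c) (k : Fin n), (j : ℕ) ≤ m → (Q * R ⟨m, hm⟩) (j, a) k = Xt (j, a) k) := by
  intro m
  induction m with
  | zero =>
    intro hm
    obtain ⟨Q0, hQ0, hB0⟩ := h0
    refine ⟨Matrix.of fun q k => if q.1 = 0 then Q0 q.2 k else 0, ?_, ?_, ?_⟩
    · ext k k'
      have h1 := congrFun (congrFun hQ0 k) k'
      simp only [mul_apply, transpose_apply, of_apply] at h1 ⊢
      rw [Fintype.sum_prod_type]
      simpa [ite_mul, Finset.sum_ite_eq'] using h1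
    · intro j a k hj
      have : j ≠ 0 := by
        intro h; subst h; simp at hj
      simp [this]
    · intro j a k hj
      have hj0 : j = 0 := by
        apply Fin.ext; simpa using hj
      subst hj0
      have hR0 : R ⟨0, hm⟩ = R 0 := by congr 1
      have h1 := congrFun (congrFun hB0 a) k
      rw [hXt]
      simp only [mul_apply, hR0] at h1 ⊢
      rw [h1]
      simp
  | succ m ih =>
    intro hm
    obtain ⟨Q, hQ, hZ, hM⟩ := ih (by omega)
    set i : Fin p := ⟨m, by omega⟩ with hi
    obtain ⟨Q', hQ', hF⟩ := hstep i
    set Qtop : Matrix (Fin n) (Fin n) ℝ := Q'.submatrix Sum.inl id with hQt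
    set Qbot : Matrix (Fin c) (Fin n) ℝ := Q'.submatrix Sum.inr id with hQb
    have hQ'eq : Q' = fromRows Qtop Qbot := by
      ext (l | a) k <;> rfl
    have hsplit : Qtopᵀ * Qtop + Qbotᵀ * Qbot = 1 := by
      rw [hQ'eq, transpose_fromRows, fromCols_mul_fromRows] at hQ'
      exact hQ'
    have hTop : Qtop * R i.succ = R i.castSucc := by
      ext l k
      have := congrFun (congrFun hF (Sum.inl l)) k
      simpa [mul_apply, hQt] using this.symm
    have hBot : Qbot * R i.succ = B i.succ := by
      ext a k
      have := congrFun (congrFun hF (Sum.inr a)) k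
      simpa [mul_apply, hQb] using this.symm
    set jnew : Fin (p + 1) := ⟨m + 1, hm⟩ with hjnew
    set E : Matrix (Fin (p + 1) × Fin c) (Fin n) ℝ :=
      Matrix.of fun q k => if q.1 = jnew then Qbot q.2 k else 0 with hE
    have hQrow0 : ∀ (M : Matrix (Fin n) (Fin n) ℝ) (j : Fin (p + 1)) (a : Fin c) (k : Fin n), m < (j : ℕ) →
        (Q * M) (j, a) k = 0 := by
      intro M j a k hj
      rw [mul_apply]
      exact Finset.sum_eq_zero fun l _ => by rw [hZ j a l hj, zero_mul]
    have hcross : (Q * Qtop)ᵀ * E = 0 := by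
      ext k k'
      rw [mul_apply]
      refine Finset.sum_eq_zero fun q _ => ?_
      by_cases hq : q.1 = jnew
      · have : ((Q * Qtop)ᵀ) k q = 0 := by
          rw [transpose_apply]
          exact hQrow0 Qtop q.1 q.2 k (by rw [hq]; simp [hjnew])
        rw [this, zero_mul]
      · simp [hE, hq]
    have hEE : Eᵀ * E = Qbotᵀ * Qbot := by
      ext k k'
      rw [mul_apply, mul_apply, Fintype.sum_prod_type]
      simp only [hE, transpose_apply, of_apply, ite_mul, zero_mul, mul_ite, mul_zero]
      rw [Finset.sum_comm]
      simp [Finset.sum_ite_eq']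
    refine ⟨Q * Qtop + E, ?_, ?_, ?_⟩
    · rw [transpose_add, Matrix.add_mul, Matrix.mul_add, Matrix.mul_add, hcross, hEE]
      have hc2 : Eᵀ * (Q * Qtop) = 0 := by
        have := congrArg transpose hcross
        rwa [transpose_mul, transpose_transpose, transpose_zero] at this
      rw [hc2]
      rw [transpose_mul, Matrix.mul_assoc Qtopᵀ, ← Matrix.mul_assoc Qᵀ, hQ, Matrix.one_mul]
      simpa using hsplit
    · intro j a k hj
      have h1 : Q (j, a) = 0 := funext fun l => hZ j a l (by omega)
      have h2 : j ≠ jnew := by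
        intro h; rw [h] at hj; simp [hjnew] at hj
      simp [hE, h2, mul_apply, h1]
    · intro j a k hj
      have hRsucc : R i.succ = R ⟨m + 1, hm⟩ := by
        congr 1
      have hEmul : ∀ (j' : Fin (p+1)) a' k', (E * R ⟨m+1,hm⟩) (j', a') k' =
          if j' = jnew then (Qbot * R ⟨m+1,hm⟩) a' k' else 0 := by
        intro j' a' k'
        rw [mul_apply]
        by_cases hq : j' = jnew
        · simp [hE, hq, mul_apply]
        · simp [hE, hq]
      rw [Matrix.add_mul, Matrix.add_apply, hEmul]
      have hQQ : (Q * Qtop * R ⟨m+1,hm⟩) (j, a) k = (Q * R ⟨m, by omega⟩) (j, a) k := by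
        rw [Matrix.mul_assoc, ← hRsucc, hTop]
        congr 2
      rcases Nat.lt_or_ge (j : ℕ) (m + 1) with hlt | hge
      · have h2 : j ≠ jnew := by
          intro h; rw [h] at hlt; simp [hjnew] at hlt
        rw [if_neg h2, hQQ, hM j a k (by omega), add_zero]
      · have hjv : (j : ℕ) = m + 1 := by omega
        have h2 : j = jnew := Fin.ext (by simpa [hjnew] using hjv)
        rw [if_pos h2, hQQ, hQrow0 _ j a k (by omega), zero_add, ← hRsucc, hBot]
        rw [hXt]
        congr 1
        apply Fin.ext
        simpa [hi] using hjv.symm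

/-- TSQR correctness: Let `Xᵀ` be stacked from row blocks
`B 0, …, B p` (so `X` is `n×((p+1)·c)` with `Xᵀ` the vertical stack). Suppose
the sequential TSQR recursion produces triangular factors `R i` whose stages
admit QR factorizations with orthonormal-column `Q`-factors:
`B 0 = Q₀ · R 0` and `[R i; B (i+1)] = Q_{i+1} · R (i+1)`. Then the final
factor satisfies `(R p)ᵀ (R p) = XXᵀ`, and the result is a valid QR
decomposition of `Xᵀ`: there is `Q` with orthonormal columns and
`Xᵀ = Q · (R p)`. -/
theorem stmt12 {n c p : ℕ}
    (B : Fin (p + 1) → Matrix (Fin c) (Fin n) ℝ)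
    (R : Fin (p + 1) → Matrix (Fin n) (Fin n) ℝ)
    (Xt : Matrix (Fin (p + 1) × Fin c) (Fin n) ℝ)
    (hXt : ∀ (i : Fin (p + 1)) (a : Fin c) (j : Fin n), Xt (i, a) j = B i a j)
    (h0 : ∃ Q0 : Matrix (Fin c) (Fin n) ℝ, Q0ᵀ * Q0 = 1 ∧ B 0 = Q0 * R 0)
    (hstep : ∀ i : Fin p,
      ∃ Qi : Matrix (Fin n ⊕ Fin c) (Fin n) ℝ, Qiᵀ * Qi = 1 ∧
        Matrix.fromRows (R i.castSucc) (B i.succ) = Qi * R i.succ) :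
    (R (Fin.last p))ᵀ * R (Fin.last p) = Xtᵀ * Xt ∧
    ∃ Q : Matrix (Fin (p + 1) × Fin c) (Fin n) ℝ,
      Qᵀ * Q = 1 ∧ Xt = Q * R (Fin.last p) := by
  obtain ⟨Q, hQ, hZ, hM⟩ := aux12 B R Xt hXt h0 hstep p (Nat.lt_succ_self p)
  have hlast : (⟨p, Nat.lt_succ_self p⟩ : Fin (p + 1)) = Fin.last p := rfl
  have hXQ : Xt = Q * R (Fin.last p) := by
    ext ⟨j, a⟩ k
    rw [← hlast]
    exact (hM j a k (Nat.lt_succ_iff.mp j.isLt)).symm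
  refine ⟨?_, Q, hQ, hXQ⟩
  rw [hXQ, transpose_mul, Matrix.mul_assoc, ← Matrix.mul_assoc Qᵀ, hQ, Matrix.one_mul]
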